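/- Let τ, ζ, ξ > 0 and ω = ζ/ξ. For the RLAD system dy/dt = −y + τ y(1−y)z, dz/dt = −ζ z + ξ(1−z), the point (y∞, z∞) = (1 − (1+ω)/τ, 1/(1+ω)) is an equilibrium, and it lies in the biologically feasible region (0,1) × (0,1) if and only if τ > 1 + ω. Moreover, the Jacobian matrix of the system at this equilibrium is upper triangular with eigenvalues λ₁ = 1 − τ/(1+ω) and λ₂ = −(ζ + ξ); in particular, if τ > 1 + ω then both eigenvalues are negative. -/

import Mathlib

lemma eig_upper (a b d : ℝ) :
    Module.End.HasEigenvalue (Matrix.toLin' !![a, b; 0, d]) a ∧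
    Module.End.HasEigenvalue (Matrix.toLin' !![a, b; 0, d]) d := by
  have h1 : Module.End.HasEigenvalue (Matrix.toLin' !![a, b; 0, d]) a := by
    apply Module.End.hasEigenvalue_of_hasEigenvector (x := ![1, 0])
    constructor
    · rw [Module.End.mem_eigenspace_iff]
      funext i
      fin_cases i <;>
        simp [Matrix.toLin'_apply, Matrix.mulVec, dotProduct,
          Fin.sum_univ_two]
    · intro h
      have := congrFun h 0
      simp at this
  refine ⟨h1, ?_⟩
  by_cases hda : d = a
  · subst hda; exact h1
  · apply Module.End.hasEigenvalue_of_hasEigenvector (x := ![b / (d - a), 1])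
    constructor
    · rw [Module.End.mem_eigenspace_iff]
      funext i
      fin_cases i <;>
        simp [Matrix.toLin'_apply, Matrix.mulVec, dotProduct,
          Fin.sum_univ_two]
      field_simp [sub_ne_zero.2 hda]
      ring
    · intro h
      have := congrFun h 1
      simp at this

/-- RLAD model: (1 − (1+ω)/τ, 1/(1+ω)) is an equilibrium; it lies in
    (0,1) × (0,1) iff τ > 1 + ω; the Jacobian there is upper triangular with
    eigenvalues 1 − τ/(1+ω) and −(ζ+ξ), both negative when τ > 1 + ω. -/
theorem stmt_7 (τ ζ ξ : ℝ) (hτ : 0 < τ) (hζ : 0 < ζ) (hξ : 0 < ξ)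
    (ω : ℝ) (hω : ω = ζ / ξ) :
    let yinf : ℝ := 1 - (1 + ω) / τ
    let zinf : ℝ := 1 / (1 + ω)
    let J : Matrix (Fin 2) (Fin 2) ℝ :=
      !![deriv (fun y => -y + τ * y * (1 - y) * zinf) yinf,
         deriv (fun z => -yinf + τ * yinf * (1 - yinf) * z) zinf;
         deriv (fun _y : ℝ => -(ζ * zinf) + ξ * (1 - zinf)) yinf,
         deriv (fun z => -(ζ * z) + ξ * (1 - z)) zinf]
    (-yinf + τ * yinf * (1 - yinf) * zinf = 0) ∧
    (-(ζ * zinf) + ξ * (1 - zinf) = 0) ∧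
    ((yinf ∈ Set.Ioo (0:ℝ) 1 ∧ zinf ∈ Set.Ioo (0:ℝ) 1) ↔ 1 + ω < τ) ∧
    J 1 0 = 0 ∧ J 0 0 = 1 - τ / (1 + ω) ∧ J 1 1 = -(ζ + ξ) ∧
    Module.End.HasEigenvalue (Matrix.toLin' J) (1 - τ / (1 + ω)) ∧
    Module.End.HasEigenvalue (Matrix.toLin' J) (-(ζ + ξ)) ∧
    (1 + ω < τ → 1 - τ / (1 + ω) < 0 ∧ -(ζ + ξ) < 0) := by
  intro yinf zinf J
  have hω0 : 0 < ω := by rw [hω]; positivity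
  have hw : (0:ℝ) < 1 + ω := by linarith
  have hζω : ζ = ω * ξ := by rw [hω]; field_simp
  -- derivatives
  have hd00 : deriv (fun y => -y + τ * y * (1 - y) * zinf) yinf
      = 1 - τ / (1 + ω) := by
    have h : HasDerivAt (fun y : ℝ => -y + τ * y * (1 - y) * zinf)
        (-1 + (τ * (1 - yinf) + τ * yinf * (-1)) * zinf) yinf := by
      have h1 : HasDerivAt (fun y : ℝ => τ * y) τ yinf := by
        simpa using (hasDerivAt_id yinf).const_mul τ
      have h2 : HasDerivAt (fun y : ℝ => 1 - y) (-1) yinf := by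
        exact ((hasDerivAt_const yinf (1:ℝ)).sub (hasDerivAt_id yinf)).congr_deriv (by ring)
      have h3 := ((h1.mul h2).mul_const zinf)
      have h4 : HasDerivAt (fun y : ℝ => -y) (-1) yinf := by
        exact (hasDerivAt_id yinf).neg
      exact h4.add h3
    rw [h.deriv]
    show -1 + (τ * (1 - (1 - (1 + ω) / τ)) + τ * (1 - (1 + ω) / τ) * (-1)) *
        (1 / (1 + ω)) = 1 - τ / (1 + ω)
    field_simp
    ring
  have hd01 : deriv (fun z => -yinf + τ * yinf * (1 - yinf) * z) zinf
      = τ * yinf * (1 - yinf) := by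
    have h : HasDerivAt (fun z : ℝ => -yinf + τ * yinf * (1 - yinf) * z)
        (τ * yinf * (1 - yinf)) zinf := by
      exact ((hasDerivAt_const zinf (-yinf)).add
        ((hasDerivAt_id zinf).const_mul (τ * yinf * (1 - yinf)))).congr_deriv (by ring)
    exact h.deriv
  have hd10 : deriv (fun _y : ℝ => -(ζ * zinf) + ξ * (1 - zinf)) yinf = 0 :=
    deriv_const _ _
  have hd11 : deriv (fun z => -(ζ * z) + ξ * (1 - z)) zinf = -(ζ + ξ) := by
    have h : HasDerivAt (fun z : ℝ => -(ζ * z) + ξ * (1 - z)) (-(ζ + ξ)) zinf := by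
      have h1 : HasDerivAt (fun z : ℝ => -(ζ * z)) (-ζ) zinf := by
        exact ((hasDerivAt_id zinf).const_mul ζ).neg.congr_deriv (by ring)
      have h2 : HasDerivAt (fun z : ℝ => ξ * (1 - z)) (ξ * (-1)) zinf := by
        exact ((hasDerivAt_const zinf (1:ℝ)).sub (hasDerivAt_id zinf)).const_mul ξ |>.congr_deriv (by ring)
      exact (h1.add h2).congr_deriv (by ring)
    exact h.deriv
  have hJ : J = !![1 - τ / (1 + ω), τ * yinf * (1 - yinf); 0, -(ζ + ξ)] := by
    show !![_, _; _, _] = _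
    rw [hd00, hd01, hd10, hd11]
  refine ⟨?_, ?_, ?_, ?_, ?_, ?_, ?_, ?_, ?_⟩
  · show -(1 - (1 + ω) / τ) + τ * (1 - (1 + ω) / τ) * (1 - (1 - (1 + ω) / τ)) *
        (1 / (1 + ω)) = 0
    field_simp
    ring
  · show -(ζ * (1 / (1 + ω))) + ξ * (1 - 1 / (1 + ω)) = 0
    rw [hζω]
    field_simp
    ring
  · constructor
    · rintro ⟨⟨hy0, _⟩, _⟩
      have : (1 + ω) / τ < 1 := by
        have h' : (0:ℝ) < 1 - (1 + ω) / τ := hy0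
        linarith
      calc 1 + ω = (1 + ω) / τ * τ := by field_simp
        _ < 1 * τ := by exact mul_lt_mul_of_pos_right this hτ
        _ = τ := by ring
    · intro h
      have h1 : (1 + ω) / τ < 1 := (div_lt_one hτ).2 h
      have h2 : 0 < (1 + ω) / τ := by positivity
      have h3 : (0:ℝ) < (1 + ω) / τ := h2
      refine ⟨⟨show (0:ℝ) < 1 - (1 + ω) / τ by linarith,
        show (1:ℝ) - (1 + ω) / τ < 1 by linarith⟩,
        ⟨by positivity, ?_⟩⟩
      show 1 / (1 + ω) < 1
      rw [div_lt_one hw]; linarith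
  · rw [hJ]; simp
  · rw [hJ]; simp
  · rw [hJ]; simp
  · rw [hJ]; exact (eig_upper _ _ _).1
  · rw [hJ]; exact (eig_upper _ _ _).2
  · intro h
    constructor
    · rw [sub_neg]
      rw [lt_div_iff₀ hw]; linarith
    · linarith
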